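/- Let X_1, X_2, … be mutually independent real-valued random variables with partial sums S_k^* = X_1 + ⋯ + X_k (S_0^* = 0). Suppose there exist integers l, m ≥ 1 and a real number L^* ≥ 0 such that E[e^{L^*(S_{n+l}^* − S_n^*)}] ≤ 1 for every n ≥ m. Then for every h ∈ [0, L^*]: sup_{k≥1} E[e^{h S_k^*}] = max_{1≤k≤l+m−1} E[e^{h S_k^*}], and for every u > 0: P[sup_{k≥1} S_k^* > u] ≤ e^{−hu} · max_{1≤k≤l+m−1} E[e^{h S_k^*}]. -/

import Mathlib

open MeasureTheory ProbabilityTheory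

lemma factor_aux {Ω : Type*} [MeasurableSpace Ω] {P : Measure Ω}
    {X : ℕ → Ω → ℝ} (hmeas : ∀ i, Measurable (X i))
    (hindep : iIndepFun X P)
    (h : ℝ) (n p : ℕ)
    (F : (((Finset.range n : Finset ℕ) : Type) → ℝ) → ENNReal) (hF : Measurable F) :
    ∫⁻ ω, F (fun i => X i ω) * ENNReal.ofReal (Real.exp (h * ∑ j ∈ Finset.Ico n p, X j ω)) ∂P
      = (∫⁻ ω, F (fun i => X i ω) ∂P) *
        ∫⁻ ω, ENNReal.ofReal (Real.exp (h * ∑ j ∈ Finset.Ico n p, X j ω)) ∂P := by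
  have hdisj : Disjoint (Finset.range n) (Finset.Ico n p) := by
    simp only [Finset.disjoint_left, Finset.mem_range, Finset.mem_Ico]
    omega
  set G : (((Finset.Ico n p : Finset ℕ) : Type) → ℝ) → ENNReal :=
    fun v => ENNReal.ofReal (Real.exp (h * ∑ i, v i)) with hGdef
  have hG : Measurable G := by
    apply ENNReal.measurable_ofReal.comp
    apply Real.measurable_exp.comp
    exact (Finset.measurable_sum Finset.univ fun i _ => measurable_pi_apply i).const_mul h
  have hInd : IndepFun (fun ω => F (fun i => X i ω)) (fun ω => G (fun i => X i ω)) P :=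
    (hindep.indepFun_finset _ _ hdisj hmeas).comp hF hG
  have h1 : Measurable fun ω => F (fun i : (Finset.range n : Finset ℕ) => X i ω) :=
    hF.comp (measurable_pi_lambda _ fun i => hmeas i)
  have h2 : Measurable fun ω => G (fun i : (Finset.Ico n p : Finset ℕ) => X i ω) :=
    hG.comp (measurable_pi_lambda _ fun i => hmeas i)
  have key := lintegral_mul_eq_lintegral_mul_lintegral_of_indepFun''
    h1.aemeasurable h2.aemeasurable hInd
  have hGeq : ∀ ω, G (fun i : (Finset.Ico n p : Finset ℕ) => X i ω)
      = ENNReal.ofReal (Real.exp (h * ∑ j ∈ Finset.Ico n p, X j ω)) := by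
    intro ω
    rw [hGdef]; simp only []
    rw [show (∑ i : { x // x ∈ Finset.Ico n p }, X (↑i) ω) = ∑ j ∈ Finset.Ico n p, X j ω from
      Finset.sum_coe_sort (Finset.Ico n p) (fun j => X j ω)]
  simp only [hGeq] at key
  exact key

/-- Corollary: quasi-periodic bound via condition (p1).
`X j` stands for `X_{j+1}` and `S* k = X_1 + ⋯ + X_k = ∑_{j < k} X j` (so `S* 0 = 0`).
Suppose `l, m ≥ 1` and `L* ≥ 0` satisfy `E[e^{L* (S*_{n+l} − S*_n)}] ≤ 1` for all `n ≥ m`.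
Then for every `h ∈ [0, L*]`:
`sup_{k≥1} E[e^{h S*_k}] = max_{1 ≤ k ≤ l+m-1} E[e^{h S*_k}]`, and for every `u > 0`:
`P[sup_{k≥1} S*_k > u] ≤ e^{-h u} · max_{1 ≤ k ≤ l+m-1} E[e^{h S*_k}]`. -/
theorem stmt11 {Ω : Type*} [MeasurableSpace Ω] (P : Measure Ω) [IsProbabilityMeasure P]
    (X : ℕ → Ω → ℝ)
    (hmeas : ∀ i, Measurable (X i))
    (hindep : iIndepFun X P)
    (S : ℕ → Ω → ℝ) (hS : ∀ k ω, S k ω = ∑ j ∈ Finset.range k, X j ω)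
    (l m : ℕ) (hl : 1 ≤ l) (hm : 1 ≤ m)
    (Lstar : ℝ) (hLstar : 0 ≤ Lstar)
    (hcond : ∀ n : ℕ, m ≤ n →
      ∫⁻ ω, ENNReal.ofReal (Real.exp (Lstar * (S (n + l) ω - S n ω))) ∂P ≤ 1)
    (h : ℝ) (hh0 : 0 ≤ h) (hhL : h ≤ Lstar) :
    (⨆ k : ℕ, ∫⁻ ω, ENNReal.ofReal (Real.exp (h * S (k + 1) ω)) ∂P) =
      (⨆ k ∈ Finset.Icc 1 (l + m - 1),
        ∫⁻ ω, ENNReal.ofReal (Real.exp (h * S k ω)) ∂P) ∧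
    ∀ u : ℝ, 0 < u →
      P (⋃ k : ℕ, {ω | u < S (k + 1) ω}) ≤
        ENNReal.ofReal (Real.exp (-h * u)) *
          ⨆ k ∈ Finset.Icc 1 (l + m - 1),
            ∫⁻ ω, ENNReal.ofReal (Real.exp (h * S k ω)) ∂P := by
  -- basic measurability
  have hSmeas : ∀ k, Measurable (S k) := by
    intro k
    have : S k = fun ω => ∑ j ∈ Finset.range k, X j ω := funext (hS k)
    rw [this]
    exact Finset.measurable_sum _ fun j _ => hmeas j
  set A : ℕ → ENNReal := fun n => ∫⁻ ω, ENNReal.ofReal (Real.exp (h * S n ω)) ∂P with hA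
  set D : ℕ → ℕ → ENNReal :=
    fun n p => ∫⁻ ω, ENNReal.ofReal (Real.exp (h * ∑ j ∈ Finset.Ico n p, X j ω)) ∂P with hD
  set M : ENNReal := ⨆ k ∈ Finset.Icc 1 (l + m - 1), A k with hM
  have hmexp : ∀ n : ℕ, Measurable fun ω => ENNReal.ofReal (Real.exp (h * S n ω)) := by
    intro n
    exact ENNReal.measurable_ofReal.comp (Real.measurable_exp.comp ((hSmeas n).const_mul h))
  have hdiff : ∀ n p : ℕ, n ≤ p → ∀ ω, S p ω - S n ω = ∑ j ∈ Finset.Ico n p, X j ω := by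
    intro n p hnp ω
    rw [hS, hS]
    simp only [Finset.range_eq_Ico]
    rw [← Finset.sum_Ico_consecutive (fun j => X j ω) (Nat.zero_le n) hnp]
    ring
  have hmul : ∀ n p : ℕ, n ≤ p → ∀ ω,
      ENNReal.ofReal (Real.exp (h * S p ω)) =
        ENNReal.ofReal (Real.exp (h * S n ω)) *
          ENNReal.ofReal (Real.exp (h * ∑ j ∈ Finset.Ico n p, X j ω)) := by
    intro n p hnp ω
    rw [← ENNReal.ofReal_mul (Real.exp_nonneg _), ← Real.exp_add, ← hdiff n p hnp ω]
    congr 2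
    ring
  -- factorization A p = A n * D n p
  have hAfactor : ∀ n p : ℕ, n ≤ p → A p = A n * D n p := by
    intro n p hnp
    have hF : Measurable (fun v : ((Finset.range n : Finset ℕ) : Type) → ℝ =>
        ENNReal.ofReal (Real.exp (h * ∑ i, v i))) := by
      apply ENNReal.measurable_ofReal.comp
      apply Real.measurable_exp.comp
      exact (Finset.measurable_sum Finset.univ fun i _ => measurable_pi_apply i).const_mul h
    have key := factor_aux hmeas hindep h n p _ hF
    have hFeq : ∀ ω, ENNReal.ofReal (Real.exp (h * ∑ i : (Finset.range n : Finset ℕ), X i ω))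
        = ENNReal.ofReal (Real.exp (h * S n ω)) := by
      intro ω
      rw [show (∑ i : { x // x ∈ Finset.range n }, X (↑i) ω) = ∑ j ∈ Finset.range n, X j ω from
        Finset.sum_coe_sort (Finset.range n) (fun j => X j ω), ← hS n ω]
    simp only [hFeq] at key
    simp only [hA, hD]
    rw [← key]
    exact lintegral_congr fun ω => hmul n p hnp ω
  -- the basic exponential bound D n (n+l) ≤ 1
  have hDle : ∀ n : ℕ, m ≤ n → D n (n + l) ≤ 1 := by
    intro n hn
    have hrw : D n (n + l) =
        ∫⁻ ω, ENNReal.ofReal (Real.exp (h * (S (n + l) ω - S n ω))) ∂P := by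
      rw [hD]
      exact lintegral_congr fun ω => by rw [hdiff n (n + l) (Nat.le_add_right n l) ω]
    rw [hrw]
    rcases eq_or_lt_of_le hLstar with hL0 | hLpos
    · -- Lstar = 0 hence h = 0
      have hh : h = 0 := le_antisymm (by rw [← hL0] at hhL; exact hhL) hh0
      simp [hh, Real.exp_zero]
    · set θ : ℝ := h / Lstar with hθ
      have hθ0 : 0 ≤ θ := div_nonneg hh0 hLstar
      have hθ1 : θ ≤ 1 := (div_le_one hLpos).mpr hhL
      have hpt : ∀ ω, ENNReal.ofReal (Real.exp (h * (S (n + l) ω - S n ω))) ≤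
          ENNReal.ofReal θ * ENNReal.ofReal (Real.exp (Lstar * (S (n + l) ω - S n ω)))
            + ENNReal.ofReal (1 - θ) := by
        intro ω
        set y : ℝ := S (n + l) ω - S n ω
        rw [← ENNReal.ofReal_mul hθ0, ← ENNReal.ofReal_add (by positivity) (by linarith)]
        apply ENNReal.ofReal_le_ofReal
        have h1 : Real.exp (h * y) = Real.exp (Lstar * y) ^ θ := by
          rw [← Real.exp_mul]
          congr 1
          rw [hθ]
          have hL0 : Lstar ≠ 0 := ne_of_gt hLpos
          field_simp
        have h2 := Real.geom_mean_le_arith_mean2_weighted hθ0 (by linarith : (0:ℝ) ≤ 1 - θ)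
          (Real.exp_nonneg (Lstar * y)) zero_le_one (by ring)
        rw [Real.one_rpow, mul_one, mul_one] at h2
        rw [h1]
        linarith
      calc ∫⁻ ω, ENNReal.ofReal (Real.exp (h * (S (n + l) ω - S n ω))) ∂P
          ≤ ∫⁻ ω, (ENNReal.ofReal θ *
              ENNReal.ofReal (Real.exp (Lstar * (S (n + l) ω - S n ω)))
              + ENNReal.ofReal (1 - θ)) ∂P := lintegral_mono hpt
        _ = ENNReal.ofReal θ *
              (∫⁻ ω, ENNReal.ofReal (Real.exp (Lstar * (S (n + l) ω - S n ω))) ∂P)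
              + ENNReal.ofReal (1 - θ) := by
            rw [lintegral_add_right _ measurable_const, lintegral_const, measure_univ, mul_one,
              lintegral_const_mul]
            exact ENNReal.measurable_ofReal.comp (Real.measurable_exp.comp
              (((hSmeas (n + l)).sub (hSmeas n)).const_mul Lstar))
        _ ≤ ENNReal.ofReal θ * 1 + ENNReal.ofReal (1 - θ) := by
            gcongr
            exact hcond n hn
        _ = 1 := by
            rw [mul_one, ← ENNReal.ofReal_add hθ0 (by linarith)]
            norm_num
  -- supermartingale-type decrease
  have hstep : ∀ n : ℕ, m ≤ n → A (n + l) ≤ A n := by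
    intro n hn
    rw [hAfactor n (n + l) (Nat.le_add_right n l)]
    calc A n * D n (n + l) ≤ A n * 1 := by gcongr; exact hDle n hn
      _ = A n := mul_one _
  -- every A k with k ≥ 1 is bounded by M
  have hAleM : ∀ k : ℕ, 1 ≤ k → A k ≤ M := by
    intro k
    induction k using Nat.strong_induction_on with
    | _ k ih =>
      intro hk1
      by_cases hk : k ≤ l + m - 1
      · rw [hM]
        exact le_biSup A (Finset.mem_Icc.mpr ⟨hk1, hk⟩)
      · have hkl : k = (k - l) + l := by omega
        have h1 : m ≤ k - l := by omega
        rw [hkl]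
        exact le_trans (hstep (k - l) h1) (ih (k - l) (by omega) (by omega))
  constructor
  · -- part 1
    apply le_antisymm
    · exact iSup_le fun k => hAleM (k + 1) (Nat.succ_le_succ (Nat.zero_le k))
    · refine iSup₂_le fun k hk => ?_
      obtain ⟨hk1, hk2⟩ := Finset.mem_Icc.mp hk
      calc A k = A ((k - 1) + 1) := by rw [show k - 1 + 1 = k from by omega]
        _ ≤ ⨆ j : ℕ, A (j + 1) := le_iSup (fun j => A (j + 1)) (k - 1)
  · -- part 2
    intro u hu
    show P (⋃ k : ℕ, {ω | u < S (k + 1) ω}) ≤ ENNReal.ofReal (Real.exp (-h * u)) * M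
    by_cases hMtop : M = ⊤
    · rw [hMtop, ENNReal.mul_top (ne_of_gt (ENNReal.ofReal_pos.mpr (Real.exp_pos _)))]
      exact le_top
    have hAfin : ∀ k, 1 ≤ k → A k ≠ ⊤ := fun k hk =>
      ne_top_of_le_ne_top hMtop (hAleM k hk)
    have hApos : ∀ k : ℕ, A k ≠ 0 := by
      intro k hk0
      have h0 := (lintegral_eq_zero_iff (hmexp k)).mp hk0
      have h1 : ∀ᵐ ω ∂P, False := by
        filter_upwards [h0] with ω hω
        simp only [Pi.zero_apply] at hω
        exact absurd hω (ne_of_gt (ENNReal.ofReal_pos.mpr (Real.exp_pos _)))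
      rw [Filter.eventually_false_iff_eq_bot, ae_eq_bot] at h1
      have h2 := measure_univ (μ := P)
      rw [h1] at h2
      simp at h2
    set B : ℕ → Set Ω := fun k => {ω | (∀ j, j < k → S (j + 1) ω ≤ u) ∧ u < S (k + 1) ω} with hB
    have hBmeas : ∀ k, MeasurableSet (B k) := by
      intro k
      have hBeq : B k = (⋂ j ∈ Finset.range k, {ω | S (j + 1) ω ≤ u}) ∩ {ω | u < S (k + 1) ω} := by
        ext ω
        simp [hB, Finset.mem_range]
      rw [hBeq]
      exact (MeasurableSet.biInter (Finset.range k).countable_toSet fun j _ =>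
        measurableSet_le (hSmeas (j + 1)) measurable_const).inter
        (measurableSet_lt measurable_const (hSmeas (k + 1)))
    have hBdisj : ∀ k k' (ω : Ω), ω ∈ B k → ω ∈ B k' → k = k' := by
      intro k k' ω h1 h2
      by_contra hne
      rcases Nat.lt_or_ge k k' with hlt | hge
      · exact absurd (h2.1 k hlt) (not_le.mpr h1.2)
      · have hlt : k' < k := by omega
        exact absurd (h1.1 k' hlt) (not_le.mpr h2.2)
    have hcover : (⋃ k : ℕ, {ω | u < S (k + 1) ω}) ⊆ ⋃ k, B k := by
      intro ω hω
      rw [Set.mem_iUnion] at hω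
      obtain ⟨k, hk⟩ := hω
      have hex : ∃ k, u < S (k + 1) ω := ⟨k, hk⟩
      refine Set.mem_iUnion.mpr ⟨Nat.find hex, ⟨fun j hj => ?_, Nat.find_spec hex⟩⟩
      exact le_of_not_gt (Nat.find_min hex hj)
    have hindsum : ∀ (K : ℕ) (f : Ω → ENNReal) (ω : Ω),
        (∑ k ∈ Finset.range K, (B k).indicator f ω) ≤ f ω := by
      intro K f ω
      by_cases hex : ∃ k ∈ Finset.range K, ω ∈ B k
      · obtain ⟨k₀, hk₀s, hk₀⟩ := hex
        have hcongr : ∀ k ∈ Finset.range K, (B k).indicator f ω = if k = k₀ then f ω else 0 := by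
          intro k hk
          by_cases hkk : k = k₀
          · subst hkk; simp [Set.indicator_of_mem hk₀]
          · rw [Set.indicator_of_notMem, if_neg hkk]
            intro hmem
            exact hkk (hBdisj k k₀ ω hmem hk₀)
        rw [Finset.sum_congr rfl hcongr, Finset.sum_ite_eq' (Finset.range K) k₀]
        simp [hk₀s]
      · push_neg at hex
        rw [Finset.sum_eq_zero fun k hk => Set.indicator_of_notMem (hex k hk) f]
        exact zero_le
    have hkey : ∀ K : ℕ, 1 ≤ K → ∀ k : ℕ, k < K →
        A K * (ENNReal.ofReal (Real.exp (h * u)) * P (B k)) ≤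
          M * ∫⁻ ω, (B k).indicator (fun ω => ENNReal.ofReal (Real.exp (h * S K ω))) ω ∂P := by
      intro K hK1 k hkK
      set pS : ℕ → (((Finset.range (k + 1) : Finset ℕ) : Type) → ℝ) → ℝ :=
        fun j v => ∑ i : ((Finset.range (k + 1) : Finset ℕ) : Type),
          if (i : ℕ) < j then v i else 0 with hpS
      have hpSmeas : ∀ j, Measurable (pS j) := by
        intro j
        apply Finset.measurable_sum
        intro i _
        by_cases hij : (i : ℕ) < j
        · simpa [hij] using measurable_pi_apply i
        · simpa [hij] using (measurable_const : Measurable fun _ : ((Finset.range (k + 1) : Finset ℕ) : Type) → ℝ => (0 : ℝ))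
      have hpSX : ∀ j : ℕ, j ≤ k + 1 → ∀ ω, pS j (fun i => X i ω) = S j ω := by
        intro j hj ω
        rw [hpS]
        simp only []
        rw [show (∑ i : { x // x ∈ Finset.range (k + 1) }, if (i : ℕ) < j then X (↑i) ω else 0)
            = ∑ i ∈ Finset.range (k + 1), (if i < j then X i ω else 0) from
          Finset.sum_coe_sort (Finset.range (k + 1)) (fun i => if i < j then X i ω else 0)]
        rw [← Finset.sum_filter, hS]
        congr 1
        ext i
        simp only [Finset.mem_filter, Finset.mem_range]
        omega
      set Aset : Set ((((Finset.range (k + 1) : Finset ℕ)) : Type) → ℝ) :=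
        {v | (∀ j, j < k → pS (j + 1) v ≤ u) ∧ u < pS (k + 1) v} with hAset
      have hAsetMeas : MeasurableSet Aset := by
        have hAeq : Aset = (⋂ j ∈ Finset.range k, {v | pS (j + 1) v ≤ u}) ∩
            {v | u < pS (k + 1) v} := by
          ext v
          simp [hAset, Finset.mem_range]
        rw [hAeq]
        exact (MeasurableSet.biInter (Finset.range k).countable_toSet fun j _ =>
          measurableSet_le (hpSmeas (j + 1)) measurable_const).inter
          (measurableSet_lt measurable_const (hpSmeas (k + 1)))
      set F : ((((Finset.range (k + 1) : Finset ℕ)) : Type) → ℝ) → ENNReal :=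
        fun v => Aset.indicator (fun v => ENNReal.ofReal (Real.exp (h * pS (k + 1) v))) v with hF
      have hFmeas : Measurable F := by
        apply Measurable.indicator _ hAsetMeas
        exact ENNReal.measurable_ofReal.comp
          (Real.measurable_exp.comp ((hpSmeas (k + 1)).const_mul h))
      have hFX : ∀ ω, F (fun i => X i ω) =
          (B k).indicator (fun ω => ENNReal.ofReal (Real.exp (h * S (k + 1) ω))) ω := by
        intro ω
        have hiff : ((fun i : ((Finset.range (k + 1) : Finset ℕ) : Type) => X (↑i) ω) ∈ Aset)
            ↔ ω ∈ B k := by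
          rw [hAset, hB]
          simp only [Set.mem_setOf_eq]
          rw [hpSX (k + 1) le_rfl ω]
          exact and_congr (forall_congr' fun j => imp_congr_right fun hj => by
            rw [hpSX (j + 1) (by omega) ω]) Iff.rfl
        rw [hF]
        simp only []
        by_cases hmem : ω ∈ B k
        · rw [Set.indicator_of_mem (hiff.mpr hmem), Set.indicator_of_mem hmem,
            hpSX (k + 1) le_rfl ω]
        · rw [Set.indicator_of_notMem (fun hm => hmem (hiff.mp hm)),
            Set.indicator_of_notMem hmem]
      have hfact := factor_aux hmeas hindep h (k + 1) K F hFmeas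
      simp only [hFX] at hfact
      have hprod : ∀ ω, (B k).indicator
            (fun ω => ENNReal.ofReal (Real.exp (h * S (k + 1) ω))) ω *
          ENNReal.ofReal (Real.exp (h * ∑ j ∈ Finset.Ico (k + 1) K, X j ω)) =
          (B k).indicator (fun ω => ENNReal.ofReal (Real.exp (h * S K ω))) ω := by
        intro ω
        by_cases hmem : ω ∈ B k
        · rw [Set.indicator_of_mem hmem, Set.indicator_of_mem hmem, ← hmul (k + 1) K hkK ω]
        · rw [Set.indicator_of_notMem hmem, Set.indicator_of_notMem hmem, zero_mul]
      rw [lintegral_congr hprod] at hfact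
      have ha : ENNReal.ofReal (Real.exp (h * u)) * P (B k) ≤
          ∫⁻ ω, (B k).indicator (fun ω => ENNReal.ofReal (Real.exp (h * S (k + 1) ω))) ω ∂P := by
        rw [← lintegral_indicator_const (hBmeas k)]
        apply lintegral_mono
        intro ω
        by_cases hmem : ω ∈ B k
        · rw [Set.indicator_of_mem hmem, Set.indicator_of_mem hmem]
          exact ENNReal.ofReal_le_ofReal (Real.exp_le_exp.mpr
            (mul_le_mul_of_nonneg_left (le_of_lt hmem.2) hh0))
        · rw [Set.indicator_of_notMem hmem, Set.indicator_of_notMem hmem]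
      calc A K * (ENNReal.ofReal (Real.exp (h * u)) * P (B k))
          ≤ A K * ∫⁻ ω, (B k).indicator
              (fun ω => ENNReal.ofReal (Real.exp (h * S (k + 1) ω))) ω ∂P := by gcongr
        _ = (A (k + 1) * D (k + 1) K) * ∫⁻ ω, (B k).indicator
              (fun ω => ENNReal.ofReal (Real.exp (h * S (k + 1) ω))) ω ∂P := by
            rw [← hAfactor (k + 1) K hkK]
        _ = A (k + 1) * ((∫⁻ ω, (B k).indicator
              (fun ω => ENNReal.ofReal (Real.exp (h * S (k + 1) ω))) ω ∂P) * D (k + 1) K) := by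
            ring
        _ = A (k + 1) * ∫⁻ ω, (B k).indicator
              (fun ω => ENNReal.ofReal (Real.exp (h * S K ω))) ω ∂P := by rw [← hfact]
        _ ≤ M * ∫⁻ ω, (B k).indicator
              (fun ω => ENNReal.ofReal (Real.exp (h * S K ω))) ω ∂P :=
            mul_le_mul_left (hAleM (k + 1) (Nat.succ_le_succ (Nat.zero_le k))) _
    have hsum : ∀ K : ℕ, (∑ k ∈ Finset.range K, P (B k)) ≤
        ENNReal.ofReal (Real.exp (-h * u)) * M := by
      intro K
      rcases Nat.eq_zero_or_pos K with hK0 | hK1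
      · simp [hK0]
      · have hchain : A K * (ENNReal.ofReal (Real.exp (h * u)) *
            ∑ k ∈ Finset.range K, P (B k)) ≤ A K * M := by
          calc A K * (ENNReal.ofReal (Real.exp (h * u)) * ∑ k ∈ Finset.range K, P (B k))
              = ∑ k ∈ Finset.range K,
                A K * (ENNReal.ofReal (Real.exp (h * u)) * P (B k)) := by
                rw [Finset.mul_sum, Finset.mul_sum]
            _ ≤ ∑ k ∈ Finset.range K, M * ∫⁻ ω, (B k).indicator
                  (fun ω => ENNReal.ofReal (Real.exp (h * S K ω))) ω ∂P :=
                Finset.sum_le_sum fun k hk => hkey K hK1 k (Finset.mem_range.mp hk)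
            _ = M * ∫⁻ ω, ∑ k ∈ Finset.range K, (B k).indicator
                  (fun ω => ENNReal.ofReal (Real.exp (h * S K ω))) ω ∂P := by
                rw [← Finset.mul_sum, lintegral_finset_sum]
                intro k _
                exact (hmexp K).indicator (hBmeas k)
            _ ≤ M * ∫⁻ ω, ENNReal.ofReal (Real.exp (h * S K ω)) ∂P :=
                mul_le_mul_right (lintegral_mono fun ω => hindsum K _ ω) M
            _ = A K * M := mul_comm _ _
        have hcore : ENNReal.ofReal (Real.exp (h * u)) *
            (∑ k ∈ Finset.range K, P (B k)) ≤ M :=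
          (ENNReal.mul_le_mul_iff_right (hApos K) (hAfin K hK1)).mp hchain
        calc (∑ k ∈ Finset.range K, P (B k))
            = ENNReal.ofReal (Real.exp (-h * u)) * (ENNReal.ofReal (Real.exp (h * u)) *
                ∑ k ∈ Finset.range K, P (B k)) := by
              rw [← mul_assoc, ← ENNReal.ofReal_mul (Real.exp_nonneg _), ← Real.exp_add,
                show -h * u + h * u = 0 by ring, Real.exp_zero, ENNReal.ofReal_one, one_mul]
          _ ≤ ENNReal.ofReal (Real.exp (-h * u)) * M := mul_le_mul_right hcore _
    calc P (⋃ k : ℕ, {ω | u < S (k + 1) ω}) ≤ P (⋃ k, B k) := measure_mono hcover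
      _ ≤ ∑' k, P (B k) := measure_iUnion_le B
      _ = ⨆ K, ∑ k ∈ Finset.range K, P (B k) := ENNReal.tsum_eq_iSup_nat
      _ ≤ ENNReal.ofReal (Real.exp (-h * u)) * M := iSup_le hsum
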